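/- arXiv:1606.09588 — 2 statements merged into one kernel-verified Lean document; each statement's English description precedes it below -/
import Mathlib

section
/- Let n ≥ 2 be an even integer, let 0 < p ≤ 1/4, and let t be an even positive integer with t ≤ 1/(n²·p). Then the involution walk satisfies ‖P^{*t} − U‖_TV ≥ 1/2 − 1/n. -/
open Finset

/-- One step of the involution walk on `S_n`: an involution `σ` with `s` transpositions
(so `σ.support.card = 2*s`) has probability
`(n/2 choose s) * p^(n/2-s) * (1-p)^s * 2^s * s! * (n-2s)! / n!`;
non-involutions have probability `0`. -/
noncomputable def stepP (n : ℕ) (p : ℝ) (σ : Equiv.Perm (Fin n)) : ℝ :=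
  if σ * σ = 1 then
    ((n / 2).choose (σ.support.card / 2) : ℝ) * p ^ (n / 2 - σ.support.card / 2) *
      (1 - p) ^ (σ.support.card / 2) * (2 : ℝ) ^ (σ.support.card / 2) *
      (Nat.factorial (σ.support.card / 2) : ℝ) * (Nat.factorial (n - σ.support.card) : ℝ) /
      (Nat.factorial n : ℝ)
  else 0

/-- The `t`-step distribution of the involution walk:
`P^{*t}(g) = Σ_{g₁⋯g_t = g} P(g₁)⋯P(g_t)`, defined by convolution. -/
noncomputable def convPow (n : ℕ) (p : ℝ) : ℕ → Equiv.Perm (Fin n) → ℝ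
  | 0 => fun g => if g = 1 then 1 else 0
  | t + 1 => fun g => ∑ h : Equiv.Perm (Fin n), stepP n p h * convPow n p t (h⁻¹ * g)

/-- Total variation distance between `P^{*t}` and the uniform distribution:
`(1/2) Σ_g |P^{*t}(g) − 1/n!|`. -/
noncomputable def tvDist (n : ℕ) (p : ℝ) (t : ℕ) : ℝ :=
  (1 / 2) * ∑ g : Equiv.Perm (Fin n), |convPow n p t g - 1 / (Nat.factorial n : ℝ)|


set_option linter.unusedSectionVars false
set_option linter.unusedVariables false
set_option maxHeartbeats 1000000
open Equiv Equiv.Perm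

section Counting
variable {α β : Type*} [DecidableEq α] [Fintype α] [DecidableEq β] [Fintype β]

def invSet (α : Type*) [DecidableEq α] [Fintype α] (s : ℕ) : Finset (Perm α) :=
  univ.filter fun σ => σ * σ = 1 ∧ σ.support.card = 2 * s

lemma permCongr_support (e : α ≃ β) (σ : Perm α) :
    (e.permCongr σ).support = σ.support.map e.toEmbedding := by
  ext b
  simp only [Equiv.Perm.mem_support, Equiv.permCongr_apply, Finset.mem_map,
    Equiv.coe_toEmbedding]
  constructor
  · intro h
    refine ⟨e.symm b, fun hc => h (by rw [hc]; simp), by simp⟩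
  · rintro ⟨a, ha, rfl⟩
    simp only [Equiv.symm_apply_apply]
    intro hc; exact ha (e.injective hc)

lemma permCongr_mul (e : α ≃ β) (σ τ : Perm α) :
    e.permCongr (σ * τ) = e.permCongr σ * e.permCongr τ := by
  ext b; simp [Equiv.permCongr_apply, Equiv.Perm.mul_apply]

lemma card_invSet_congr (e : α ≃ β) (s : ℕ) :
    (invSet α s).card = (invSet β s).card := by
  apply Finset.card_bij (fun σ _ => e.permCongr σ)
  · intro σ hσ
    simp only [invSet, Finset.mem_filter, Finset.mem_univ, true_and] at hσ ⊢
    refine ⟨?_, ?_⟩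
    · rw [← permCongr_mul, hσ.1]; ext b; simp [Equiv.permCongr_apply]
    · rw [permCongr_support, Finset.card_map, hσ.2]
  · intro σ _ τ _ h
    exact e.permCongr.injective h
  · intro τ hτ
    refine ⟨e.symm.permCongr τ, ?_, ?_⟩
    · simp only [invSet, Finset.mem_filter, Finset.mem_univ, true_and] at hτ ⊢
      refine ⟨?_, ?_⟩
      · rw [← permCongr_mul, hτ.1]; ext a; simp [Equiv.permCongr_apply]
      · rw [permCongr_support, Finset.card_map, hτ.2]
    · ext b; simp [Equiv.permCongr_apply]

def invCard (m s : ℕ) : ℕ := (invSet (Fin m) s).card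

lemma card_invSet (α : Type*) [DecidableEq α] [Fintype α] (s : ℕ) :
    (invSet α s).card = invCard (Fintype.card α) s :=
  card_invSet_congr (Fintype.equivFin α) s

lemma invCard_zero (m : ℕ) : invCard m 0 = 1 := by
  unfold invCard invSet
  rw [Finset.card_eq_one]
  refine ⟨1, ?_⟩
  ext σ
  simp only [Finset.mem_filter, Finset.mem_univ, true_and, Finset.mem_singleton, mul_zero]
  constructor
  · rintro ⟨-, h⟩
    rwa [Finset.card_eq_zero, Equiv.Perm.support_eq_empty_iff] at h
  · rintro rfl
    simp

def avoidSet (α : Type*) [DecidableEq α] [Fintype α] (a b : α) (s : ℕ) : Finset (Perm α) :=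
  univ.filter fun τ => τ * τ = 1 ∧ τ.support.card = 2 * s ∧ τ a = a ∧ τ b = b

lemma card_support_ofSubtype {p : α → Prop} [DecidablePred p] (g : Perm (Subtype p)) :
    (Equiv.Perm.ofSubtype g).support.card = g.support.card := by
  rw [← Equiv.Perm.sum_cycleType, ← Equiv.Perm.sum_cycleType, Equiv.Perm.cycleType_ofSubtype]

lemma ofSubtype_injective {p : α → Prop} [DecidablePred p] :
    Function.Injective (Equiv.Perm.ofSubtype : Perm (Subtype p) → Perm α) := by
  intro f g h
  ext x
  have := congrArg (fun σ : Perm α => σ (x : α)) h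
  simpa [Equiv.Perm.ofSubtype_apply_of_mem f x.2,
    Equiv.Perm.ofSubtype_apply_of_mem g x.2] using this

lemma card_avoidSet {a b : α} (hab : a ≠ b) (s : ℕ) :
    (avoidSet α a b s).card = invCard (Fintype.card α - 2) s := by
  classical
  have hcard : Fintype.card {x : α // x ≠ a ∧ x ≠ b} = Fintype.card α - 2 := by
    rw [Fintype.card_subtype]
    have : (univ.filter fun x : α => x ≠ a ∧ x ≠ b) = univ \ {a, b} := by
      ext x; simp [not_or]
    rw [this, Finset.card_sdiff_of_subset (by simp), Finset.card_insert_of_notMem (by simpa using hab),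
      Finset.card_singleton, Finset.card_univ]
  rw [← hcard, ← card_invSet]
  symm
  apply Finset.card_bij (fun g _ => Equiv.Perm.ofSubtype g)
  · intro g hg
    simp only [invSet, Finset.mem_filter, Finset.mem_univ, true_and] at hg
    simp only [avoidSet, Finset.mem_filter, Finset.mem_univ, true_and]
    refine ⟨?_, ?_, ?_, ?_⟩
    · rw [← map_mul, hg.1, map_one]
    · rw [card_support_ofSubtype, hg.2]
    · exact Equiv.Perm.ofSubtype_apply_of_not_mem g (by simp)
    · exact Equiv.Perm.ofSubtype_apply_of_not_mem g (by simp)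
  · intro g _ g' _ h
    exact _root_.ofSubtype_injective h
  · intro τ hτ
    simp only [avoidSet, Finset.mem_filter, Finset.mem_univ, true_and] at hτ
    obtain ⟨h1, h2, h3, h4⟩ := hτ
    have hfix : ∀ x : α, ¬(x ≠ a ∧ x ≠ b) → τ x = x := by
      intro x hx
      rcases not_and_or.mp hx with h | h
      · rw [not_ne_iff.mp h, h3]
      · rw [not_ne_iff.mp h, h4]
    have hmem : ∀ x : α, (x ≠ a ∧ x ≠ b) ↔ (τ x ≠ a ∧ τ x ≠ b) := by
      intro x
      constructor
      · intro hx
        constructor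
        · intro hc
          have : τ a = a := h3
          have := congrArg (fun σ : Perm α => σ x) h1
          simp only [Equiv.Perm.mul_apply, Equiv.Perm.one_apply] at this
          rw [hc, h3] at this
          exact hx.1 this.symm
        · intro hc
          have := congrArg (fun σ : Perm α => σ x) h1
          simp only [Equiv.Perm.mul_apply, Equiv.Perm.one_apply] at this
          rw [hc, h4] at this
          exact hx.2 this.symm
      · intro hx
        constructor
        · intro hc; exact hx.1 (by rw [hc, h3])
        · intro hc; exact hx.2 (by rw [hc, h4])
    refine ⟨τ.subtypePerm (fun x => (hmem x).symm), ?_, ?_⟩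
    · simp only [invSet, Finset.mem_filter, Finset.mem_univ, true_and]
      have hof : Equiv.Perm.ofSubtype (τ.subtypePerm (fun x => (hmem x).symm)) = τ :=
        Equiv.Perm.ofSubtype_subtypePerm _ (fun x hx =>
          by_contra fun hne => hx (hfix x hne))
      refine ⟨?_, ?_⟩
      · apply _root_.ofSubtype_injective (p := fun x : α => x ≠ a ∧ x ≠ b)
        rw [map_mul, hof, h1, map_one]
      · have := card_support_ofSubtype (p := fun x : α => x ≠ a ∧ x ≠ b) (τ.subtypePerm (fun x => (hmem x).symm))
        rw [hof, h2] at this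
        omega
    · exact Equiv.Perm.ofSubtype_subtypePerm _ (fun x hx =>
        by_contra fun hne => hx (hfix x hne))

lemma mul_self_mul_self {G : Type*} [Group G] {x y : G} (h : Commute x y) :
    (x * y) * (x * y) = (x * x) * (y * y) := by
  rw [mul_assoc, ← mul_assoc y x y, ← h.eq, mul_assoc, mul_assoc]

lemma disjoint_swap_of_fixed {τ : Perm α} {a b : α} (h3 : τ a = a) (h4 : τ b = b) :
    Equiv.Perm.Disjoint τ (Equiv.swap a b) := by
  intro x
  by_cases hxa : x = a
  · left; rw [hxa, h3]
  by_cases hxb : x = b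
  · left; rw [hxb, h4]
  · right; exact Equiv.swap_apply_of_ne_of_ne hxa hxb

lemma support_card_mul_swap {τ : Perm α} {a b : α} (hab : a ≠ b)
    (hdisj : Equiv.Perm.Disjoint τ (Equiv.swap a b)) :
    (τ * Equiv.swap a b).support.card = τ.support.card + 2 := by
  have hd : _root_.Disjoint τ.support (Equiv.Perm.support (Equiv.swap a b)) :=
    hdisj.disjoint_support
  rw [hdisj.support_mul, Finset.card_union_of_disjoint hd, Equiv.Perm.support_swap hab,
    Finset.card_insert_of_notMem (by simpa using hab), Finset.card_singleton]

lemma key_bij (s : ℕ) :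
    ((invSet α (s+1)).sigma (fun σ => σ.support)).card
      = (((univ : Finset α).offDiag).sigma (fun ab => avoidSet α ab.1 ab.2 s)).card := by
  apply Finset.card_bij (fun x _ => ⟨(x.2, x.1 x.2), x.1 * Equiv.swap x.2 (x.1 x.2)⟩)
  · rintro ⟨σ, a⟩ hx
    simp only [Finset.mem_sigma] at hx
    obtain ⟨hσ, ha⟩ := hx
    simp only [invSet, Finset.mem_filter, Finset.mem_univ, true_and] at hσ
    obtain ⟨h1, h2⟩ := hσ
    have hba : σ a ≠ a := Equiv.Perm.mem_support.mp ha
    have hab : a ≠ σ a := Ne.symm hba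
    have hσb : σ (σ a) = a := by
      have := congrArg (fun σ' : Perm α => σ' a) h1
      simpa using this
    have hτa : (σ * Equiv.swap a (σ a)) a = a := by
      simp [Equiv.Perm.mul_apply, Equiv.swap_apply_left, hσb]
    have hτb : (σ * Equiv.swap a (σ a)) (σ a) = σ a := by
      simp [Equiv.Perm.mul_apply, Equiv.swap_apply_right]
    have hdisj : Equiv.Perm.Disjoint (σ * Equiv.swap a (σ a)) (Equiv.swap a (σ a)) :=
      disjoint_swap_of_fixed hτa hτb
    have hστ : σ = (σ * Equiv.swap a (σ a)) * Equiv.swap a (σ a) := by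
      rw [mul_assoc, Equiv.swap_mul_self, mul_one]
    have hτ2 : (σ * Equiv.swap a (σ a)) * (σ * Equiv.swap a (σ a)) = 1 := by
      have := mul_self_mul_self hdisj.commute
      rw [← hστ, h1, Equiv.swap_mul_self, mul_one] at this
      exact this.symm
    have hsupp : (σ * Equiv.swap a (σ a)).support.card = 2 * s := by
      have := support_card_mul_swap hab hdisj
      rw [← hστ, h2] at this
      omega
    simp only [Finset.mem_sigma, Finset.mem_offDiag, Finset.mem_univ, true_and]
    exact ⟨hab, by
      simp only [avoidSet, Finset.mem_filter, Finset.mem_univ, true_and]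
      exact ⟨hτ2, hsupp, hτa, hτb⟩⟩
  · rintro ⟨σ, a⟩ hx ⟨σ', a'⟩ hx' h
    simp only [Sigma.mk.inj_iff, Prod.mk.injEq, heq_eq_eq] at h
    obtain ⟨⟨ha, hb⟩, hτ⟩ := h
    subst ha
    have hσ : σ = σ' := by
      have h2 := congrArg (fun g : Perm α => g * Equiv.swap a (σ a)) hτ
      rw [mul_assoc, Equiv.swap_mul_self, mul_one] at h2
      conv_rhs at h2 => rw [hb]
      rw [mul_assoc, Equiv.swap_mul_self, mul_one] at h2
      exact h2
    simp [hσ]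
  · rintro ⟨⟨a, b⟩, τ⟩ hy
    simp only [Finset.mem_sigma, Finset.mem_offDiag, Finset.mem_univ, true_and] at hy
    obtain ⟨hab, hτ⟩ := hy
    simp only [avoidSet, Finset.mem_filter, Finset.mem_univ, true_and] at hτ
    obtain ⟨h1, h2, h3, h4⟩ := hτ
    have hdisj : Equiv.Perm.Disjoint τ (Equiv.swap a b) := disjoint_swap_of_fixed h3 h4
    have hσa : (τ * Equiv.swap a b) a = b := by
      simp [Equiv.Perm.mul_apply, Equiv.swap_apply_left, h4]
    have hσ2 : (τ * Equiv.swap a b) * (τ * Equiv.swap a b) = 1 := by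
      rw [mul_self_mul_self hdisj.commute, h1, Equiv.swap_mul_self, mul_one]
    have hsupp : (τ * Equiv.swap a b).support.card = 2 * (s + 1) := by
      rw [support_card_mul_swap hab hdisj, h2]; ring
    refine ⟨⟨τ * Equiv.swap a b, a⟩, ?_, ?_⟩
    · simp only [Finset.mem_sigma, invSet, Finset.mem_filter, Finset.mem_univ, true_and]
      exact ⟨⟨hσ2, hsupp⟩, Equiv.Perm.mem_support.mpr (by rw [hσa]; exact Ne.symm hab)⟩
    · simp only [Sigma.mk.inj_iff, Prod.mk.injEq, heq_eq_eq]
      refine ⟨⟨trivial, hσa⟩, ?_⟩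
      rw [hσa, mul_assoc, Equiv.swap_mul_self, mul_one]

lemma invCard_rec (m s : ℕ) :
    invCard m (s+1) * (2*(s+1)) = m * (m-1) * invCard (m-2) s := by
  have h1 : ((invSet (Fin m) (s+1)).sigma fun σ => σ.support).card
      = invCard m (s+1) * (2*(s+1)) := by
    rw [Finset.card_sigma]
    have hc : ∀ σ ∈ invSet (Fin m) (s+1), σ.support.card = 2*(s+1) := fun σ hσ => by
      simp only [invSet, Finset.mem_filter] at hσ; exact hσ.2.2
    rw [Finset.sum_congr rfl hc, Finset.sum_const, smul_eq_mul]; rfl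
  have h2 : (((univ : Finset (Fin m)).offDiag).sigma
        (fun ab => avoidSet (Fin m) ab.1 ab.2 s)).card
      = m * (m-1) * invCard (m-2) s := by
    rw [Finset.card_sigma]
    have hc : ∀ ab ∈ (univ : Finset (Fin m)).offDiag,
        (avoidSet (Fin m) ab.1 ab.2 s).card = invCard (m-2) s := by
      intro ab hab
      rw [Finset.mem_offDiag] at hab
      rw [card_avoidSet hab.2.2, Fintype.card_fin]
    rw [Finset.sum_congr rfl hc, Finset.sum_const, smul_eq_mul, Finset.offDiag_card,
      Finset.card_univ, Fintype.card_fin]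
    congr 1
    cases m with
    | zero => simp
    | succ k =>
      simp only [Nat.succ_sub_one]
      have : (k+1)*(k+1) = (k+1)*k + (k+1) := by ring
      omega
  rw [← h1, ← h2, key_bij]

lemma invCard_eq_zero {m s : ℕ} (h : m < 2 * s) : invCard m s = 0 := by
  unfold invCard invSet
  rw [Finset.card_eq_zero]
  ext σ
  simp only [Finset.mem_filter, Finset.mem_univ, true_and, Finset.notMem_empty, iff_false,
    not_and]
  intro _
  intro hc
  have := Finset.card_le_univ σ.support
  rw [hc] at this
  simp only [Finset.card_univ, Fintype.card_fin] at this
  omega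

lemma invCard_factorial : ∀ (s m : ℕ), 2 * s ≤ m →
    invCard m s * (2 ^ s * s.factorial * (m - 2 * s).factorial) = m.factorial := by
  intro s
  induction s with
  | zero => intro m _; simp [invCard_zero]
  | succ s ih =>
    intro m hm
    obtain ⟨k, rfl⟩ : ∃ k, m = k + 2 := ⟨m - 2, by omega⟩
    have hks : 2 * s ≤ k := by omega
    have hrec := invCard_rec (k+2) (s)
    have hsub : k + 2 - 2 = k := by omega
    have hsub1 : k + 2 - 1 = k + 1 := by omega
    rw [hsub, hsub1] at hrec
    have ihk := ih k hks
    calc invCard (k+2) (s+1) * (2 ^ (s+1) * (s+1).factorial * (k + 2 - 2*(s+1)).factorial)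
        = (invCard (k+2) (s+1) * (2*(s+1))) *
            (2 ^ s * s.factorial * (k - 2*s).factorial) := by
          have : k + 2 - 2*(s+1) = k - 2*s := by omega
          rw [this, Nat.factorial_succ, pow_succ]
          ring
      _ = (k+2) * (k+1) * (invCard k s * (2 ^ s * s.factorial * (k - 2*s).factorial)) := by
          rw [hrec]; ring
      _ = (k+2) * (k+1) * k.factorial := by rw [ihk]
      _ = (k+2).factorial := by
          rw [Nat.factorial_succ, Nat.factorial_succ]; ring

end Counting

section Analysis

noncomputable def eps {n : ℕ} (g : Perm (Fin n)) : ℝ := ((Perm.sign g : ℤ) : ℝ)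

lemma eps_one {n : ℕ} : eps (1 : Perm (Fin n)) = 1 := by simp [eps]

lemma eps_mul {n : ℕ} (g h : Perm (Fin n)) : eps (g * h) = eps g * eps h := by
  simp only [eps, map_mul, Units.val_mul, Int.cast_mul]

lemma abs_eps {n : ℕ} (g : Perm (Fin n)) : |eps g| = 1 := by
  rcases Int.units_eq_one_or (Perm.sign g) with h | h <;> simp [eps, h]

lemma involution_data {n : ℕ} {σ : Perm (Fin n)} (h : σ * σ = 1) :
    σ.support.card = 2 * (σ.support.card / 2) ∧
      eps σ = (-1 : ℝ) ^ (σ.support.card / 2) := by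
  have horder : σ ^ 2 = 1 := by rw [pow_two]; exact h
  have hc2 : ∀ c ∈ σ.cycleType, c = 2 := by
    intro c hc
    have hdvd : c ∣ orderOf σ := (Equiv.Perm.lcm_cycleType σ) ▸ Multiset.dvd_lcm hc
    have ho : orderOf σ ∣ 2 := orderOf_dvd_of_pow_eq_one horder
    have hle := Nat.le_of_dvd (by norm_num) (hdvd.trans ho)
    have h2c := Equiv.Perm.two_le_of_mem_cycleType hc
    omega
  have hrep : σ.cycleType = Multiset.replicate (Multiset.card σ.cycleType) 2 :=
    Multiset.eq_replicate.mpr ⟨rfl, hc2⟩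
  have hsum : σ.support.card = 2 * Multiset.card σ.cycleType := by
    have h' := Equiv.Perm.sum_cycleType σ
    rw [hrep, Multiset.sum_replicate, smul_eq_mul] at h'
    omega
  have hk : σ.support.card / 2 = Multiset.card σ.cycleType := by omega
  refine ⟨by omega, ?_⟩
  have hs := Equiv.Perm.sign_of_cycleType σ
  rw [hrep, Multiset.sum_replicate, Multiset.card_replicate, smul_eq_mul] at hs
  rw [eps, hs, hk]
  rw [Units.val_pow_eq_pow_val]
  push_cast
  rw [pow_add, pow_mul']
  norm_num

lemma sum_eps_zero {n : ℕ} (hn : 2 ≤ n) : ∑ g : Perm (Fin n), eps g = 0 := by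
  have hab : (⟨0, by omega⟩ : Fin n) ≠ ⟨1, by omega⟩ := by simp [Fin.ext_iff]
  have hswap : eps (Equiv.swap (⟨0, by omega⟩ : Fin n) ⟨1, by omega⟩) = -1 := by
    simp [eps, Equiv.Perm.sign_swap hab]
  have hbij : ∑ g : Perm (Fin n), eps g
      = ∑ g : Perm (Fin n), eps (Equiv.swap (⟨0, by omega⟩ : Fin n) ⟨1, by omega⟩ * g) := by
    apply Fintype.sum_bijective (fun g : Perm (Fin n) =>
      Equiv.swap (⟨0, by omega⟩ : Fin n) ⟨1, by omega⟩ * g)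
      (Group.mulLeft_bijective _) _ _ (fun g => rfl) |>.symm
  have : ∑ g : Perm (Fin n), eps g = - ∑ g : Perm (Fin n), eps g := by
    nth_rewrite 1 [hbij]
    rw [← Finset.sum_neg_distrib]
    apply Finset.sum_congr rfl
    intro g _
    rw [eps_mul, hswap]; ring
  linarith

lemma conv_eps (n : ℕ) (p : ℝ) (t : ℕ) :
    ∑ g : Perm (Fin n), eps g * convPow n p t g
      = (∑ g : Perm (Fin n), eps g * stepP n p g) ^ t := by
  induction t with
  | zero =>
    simp only [convPow, pow_zero, mul_ite, mul_one, mul_zero]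
    rw [Finset.sum_ite_eq' Finset.univ (1 : Perm (Fin n)) eps]
    simp [eps_one]
  | succ t ih =>
    rw [pow_succ, ← ih]
    calc ∑ g : Perm (Fin n), eps g * convPow n p (t+1) g
        = ∑ g : Perm (Fin n), ∑ h : Perm (Fin n),
            eps g * (stepP n p h * convPow n p t (h⁻¹ * g)) := by
          apply Finset.sum_congr rfl
          intro g _
          show eps g * (∑ h : Perm (Fin n), stepP n p h * convPow n p t (h⁻¹ * g)) = _
          rw [Finset.mul_sum]
      _ = ∑ h : Perm (Fin n), ∑ g : Perm (Fin n),
            eps g * (stepP n p h * convPow n p t (h⁻¹ * g)) := Finset.sum_comm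
      _ = ∑ h : Perm (Fin n), ∑ g : Perm (Fin n),
            eps (h * g) * (stepP n p h * convPow n p t g) := by
          apply Finset.sum_congr rfl
          intro h _
          exact (Fintype.sum_bijective (fun g : Perm (Fin n) => h * g)
            (Group.mulLeft_bijective h) _ _
            (fun g => by rw [inv_mul_cancel_left])).symm
      _ = ∑ h : Perm (Fin n), (eps h * stepP n p h) *
            ∑ g : Perm (Fin n), eps g * convPow n p t g := by
          apply Finset.sum_congr rfl
          intro h _
          rw [Finset.mul_sum]
          apply Finset.sum_congr rfl
          intro g _
          rw [eps_mul]; ring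
      _ = (∑ g : Perm (Fin n), eps g * convPow n p t g) *
            ∑ g : Perm (Fin n), eps g * stepP n p g := by
          rw [← Finset.sum_mul, mul_comm]

end Analysis


lemma step_sum {n : ℕ} (hne : Even n) (p : ℝ) :
    ∑ g : Perm (Fin n), eps g * stepP n p g = (2 * p - 1) ^ (n / 2) := by
  have hdvd : 2 ∣ n := hne.two_dvd
  set m := n / 2 with hmdef
  have hn2m : n = 2 * m := by omega
  have hfil : ∑ g : Perm (Fin n), eps g * stepP n p g
      = ∑ σ ∈ univ.filter (fun σ : Perm (Fin n) => σ * σ = 1), eps σ * stepP n p σ := by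
    rw [Finset.sum_filter]
    apply Finset.sum_congr rfl
    intro σ _
    by_cases h : σ * σ = 1
    · simp [h]
    · simp [stepP, h]
  have hmaps : ∀ σ ∈ univ.filter (fun σ : Perm (Fin n) => σ * σ = 1),
      σ.support.card / 2 ∈ Finset.range (m + 1) := by
    intro σ _
    rw [Finset.mem_range]
    have := Finset.card_le_univ σ.support
    simp only [Finset.card_univ, Fintype.card_fin] at this
    omega
  rw [hfil, ← Finset.sum_fiberwise_of_maps_to hmaps]
  have hfib : ∀ k ∈ Finset.range (m + 1),
      ∑ σ ∈ (univ.filter (fun σ : Perm (Fin n) => σ * σ = 1)).filter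
          (fun σ => σ.support.card / 2 = k), eps σ * stepP n p σ
        = (-(1 - p)) ^ k * p ^ (m - k) * ((m.choose k : ℝ)) := by
    intro k hk
    rw [Finset.mem_range] at hk
    have h2k : 2 * k ≤ n := by omega
    have hset : (univ.filter (fun σ : Perm (Fin n) => σ * σ = 1)).filter
        (fun σ => σ.support.card / 2 = k) = invSet (Fin n) k := by
      ext σ
      simp only [invSet, Finset.mem_filter, Finset.mem_univ, true_and, Finset.filter_filter]
      constructor
      · rintro ⟨h1, h2⟩
        refine ⟨h1, ?_⟩
        have := (involution_data h1).1
        omega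
      · rintro ⟨h1, h2⟩
        exact ⟨h1, by omega⟩
    rw [hset]
    have hconst : ∀ σ ∈ invSet (Fin n) k, eps σ * stepP n p σ
        = (-1 : ℝ) ^ k * ((m.choose k : ℝ) * p ^ (m - k) * (1 - p) ^ k * 2 ^ k *
            (Nat.factorial k : ℝ) * (Nat.factorial (n - 2 * k) : ℝ) / (Nat.factorial n : ℝ)) := by
      intro σ hσ
      simp only [invSet, Finset.mem_filter, Finset.mem_univ, true_and] at hσ
      obtain ⟨h1, h2⟩ := hσ
      have hk2 : σ.support.card / 2 = k := by omega
      rw [(involution_data h1).2, hk2, stepP, if_pos h1, hk2, h2, ← hmdef]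
    rw [Finset.sum_congr rfl hconst, Finset.sum_const, card_invSet, Fintype.card_fin,
      nsmul_eq_mul]
    have hfact : (invCard n k : ℝ) * ((2 : ℝ) ^ k * (Nat.factorial k : ℝ) *
        (Nat.factorial (n - 2 * k) : ℝ)) = (Nat.factorial n : ℝ) := by
      exact_mod_cast congrArg (Nat.cast (R := ℝ)) (invCard_factorial k n h2k)
    have hne0 : (Nat.factorial n : ℝ) ≠ 0 := Nat.cast_ne_zero.mpr (Nat.factorial_ne_zero n)
    have hneg : (-(1 - p)) ^ k = (-1 : ℝ) ^ k * (1 - p) ^ k := by rw [neg_pow]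
    calc (invCard n k : ℝ) * ((-1 : ℝ) ^ k * ((m.choose k : ℝ) * p ^ (m - k) * (1 - p) ^ k *
            2 ^ k * (Nat.factorial k : ℝ) * (Nat.factorial (n - 2 * k) : ℝ) /
            (Nat.factorial n : ℝ)))
        = ((-1 : ℝ) ^ k * (1 - p) ^ k) * (p ^ (m - k) * (m.choose k : ℝ)) *
            ((invCard n k : ℝ) * ((2 : ℝ) ^ k * (Nat.factorial k : ℝ) *
              (Nat.factorial (n - 2 * k) : ℝ)) / (Nat.factorial n : ℝ)) := by ring
      _ = (-(1 - p)) ^ k * p ^ (m - k) * ((m.choose k : ℝ)) := by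
          rw [hfact, div_self hne0, mul_one, hneg]; ring
  rw [Finset.sum_congr rfl hfib]
  have := add_pow (-(1 - p)) p m
  rw [show (-(1 - p) + p) = 2 * p - 1 by ring] at this
  rw [← this]


/-- For small `p` and few steps, the involution walk is far from uniform. -/
theorem stmt3 (n : ℕ) (hn : 2 ≤ n) (hne : Even n) (p : ℝ) (hp0 : 0 < p) (hp : p ≤ 1 / 4)
    (t : ℕ) (ht : 0 < t) (hte : Even t) (htle : (t : ℝ) ≤ 1 / ((n : ℝ) ^ 2 * p)) :
    tvDist n p t ≥ 1 / 2 - 1 / n := by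
  have hn0 : (0 : ℝ) < n := by positivity
  set u : ℝ := 1 / (Nat.factorial n : ℝ) with hu
  set e : ℕ := (n / 2) * t with he
  have hsum : ∑ g : Perm (Fin n), eps g * (convPow n p t g - u) = (2 * p - 1) ^ e := by
    simp only [mul_sub]
    rw [Finset.sum_sub_distrib, conv_eps, step_sum hne, ← pow_mul]
    have : ∑ g : Perm (Fin n), eps g * u = 0 := by
      rw [← Finset.sum_mul, sum_eps_zero hn, zero_mul]
    rw [this, sub_zero]
  have habs : |(2 * p - 1) ^ e|
      ≤ ∑ g : Perm (Fin n), |convPow n p t g - u| := by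
    rw [← hsum]
    calc |∑ g : Perm (Fin n), eps g * (convPow n p t g - u)|
        ≤ ∑ g : Perm (Fin n), |eps g * (convPow n p t g - u)| :=
          Finset.abs_sum_le_sum_abs _ _
      _ = ∑ g : Perm (Fin n), |convPow n p t g - u| := by
          apply Finset.sum_congr rfl
          intro g _
          rw [abs_mul, abs_eps, one_mul]
  -- numeric lower bound on (2p-1)^e
  have heven : Even e := hte.mul_left _
  have hflip : (2 * p - 1) ^ e = (1 - 2 * p) ^ e := by
    rw [show (2 * p - 1 : ℝ) = -(1 - 2 * p) by ring, heven.neg_pow]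
  have hcast : ((n / 2 : ℕ) : ℝ) * 2 = (n : ℝ) := by
    exact_mod_cast congrArg (Nat.cast (R := ℝ)) (Nat.div_mul_cancel hne.two_dvd)
  have hntp : (n : ℝ) * t * p ≤ 1 / n := by
    have hnp : (0 : ℝ) < (n : ℝ) ^ 2 * p := by positivity
    have h1 : (t : ℝ) * ((n : ℝ) ^ 2 * p) ≤ 1 := (le_div_iff₀ hnp).mp htle
    rw [le_div_iff₀ hn0]
    calc (n : ℝ) * t * p * n = (t : ℝ) * ((n : ℝ) ^ 2 * p) := by ring
      _ ≤ 1 := h1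
  have hbern : 1 - (n : ℝ) * t * p ≤ (1 - 2 * p) ^ e := by
    have h2 : (-2 : ℝ) ≤ -(2 * p) := by linarith
    have := one_add_mul_le_pow h2 e
    have hee : ((e : ℕ) : ℝ) = ((n / 2 : ℕ) : ℝ) * t := by
      rw [he]; push_cast; ring
    calc 1 - (n : ℝ) * t * p = 1 + ((e : ℕ) : ℝ) * (-(2 * p)) := by
          rw [hee, ← hcast]; ring
      _ ≤ (1 + -(2 * p)) ^ e := this
      _ = (1 - 2 * p) ^ e := by rw [show (1 + -(2 * p) : ℝ) = 1 - 2 * p by ring]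
  have hlow : 1 - 1 / (n : ℝ) ≤ (2 * p - 1) ^ e := by
    rw [hflip]
    calc 1 - 1 / (n : ℝ) ≤ 1 - (n : ℝ) * t * p := by linarith
      _ ≤ (1 - 2 * p) ^ e := hbern
  have hfinal : 1 - 1 / (n : ℝ) ≤ ∑ g : Perm (Fin n), |convPow n p t g - u| :=
    le_trans (le_trans hlow (le_abs_self _)) habs
  rw [tvDist]
  rw [ge_iff_le]
  have h2n : 1 / (2 * (n : ℝ)) ≤ 1 / n := by
    apply div_le_div_of_nonneg_left (by norm_num) hn0
    linarith
  calc (1 : ℝ) / 2 - 1 / n ≤ 1 / 2 - 1 / (2 * n) := by linarith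
    _ = (1 / 2) * (1 - 1 / n) := by field_simp
    _ ≤ (1 / 2) * ∑ g : Perm (Fin n), |convPow n p t g - u| := by linarith
end

section
/- Let n ≥ 2 be an even integer and let i be an integer with 0 ≤ i ≤ n − 1. Consider S(n, i) := Σ_{k ≥ 0} Σ_{l ≥ 0, k + l ≤ n/2} M(n/2; k, l) · (−1)^l · C̃(n − 2k − 2l − 1, i − 2l), where M(m; a, b) = m!/(a! b! (m−a−b)!) and C̃(m, r) is the generalized binomial coefficient for integer m: C̃(m, r) = m(m−1)⋯(m−r+1)/r! for integers r ≥ 0 (so C̃(−1, r) = (−1)^r) and C̃(m, r) = 0 for r < 0. Then: (a) if 2i ≤ n − 1, S(n, i) = 2^{n/2} · C(n/2 − 1, i); and (b) if n/2 ≤ i ≤ n − 1, S(n, i) = 0. -/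
open Finset

/-- `M(m; a, b) = m!/(a! b! (m−a−b)!)` when `a + b ≤ m`, and `0` otherwise. -/
noncomputable def Mcoef (m a b : ℕ) : ℝ :=
  if a + b ≤ m then
    (Nat.factorial m : ℝ) /
      ((Nat.factorial a : ℝ) * (Nat.factorial b : ℝ) * (Nat.factorial (m - a - b) : ℝ))
  else 0

/-- `M₃(m; a, b, c) = m!/(a! b! c!)` when `a, b, c` are nonnegative integers with
`a + b + c = m`, and `0` otherwise (in particular when some argument is not a
nonnegative integer). -/
noncomputable def M3 (m : ℕ) (a b c : ℚ) : ℝ :=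
  if 0 ≤ a ∧ 0 ≤ b ∧ 0 ≤ c ∧ a.den = 1 ∧ b.den = 1 ∧ c.den = 1 ∧ a + b + c = (m : ℚ) then
    (Nat.factorial m : ℝ) /
      ((Nat.factorial a.num.toNat : ℝ) * (Nat.factorial b.num.toNat : ℝ) *
        (Nat.factorial c.num.toNat : ℝ))
  else 0

/-- Ordinary binomial coefficient `C(a, b)` for integers, `0` when `b < 0` or `b > a`. -/
noncomputable def Cb (a b : ℤ) : ℝ :=
  if 0 ≤ b ∧ b ≤ a then ((a.toNat).choose b.toNat : ℝ) else 0

/-- Generalized binomial coefficient `C̃(m, r) = m(m−1)⋯(m−r+1)/r!` for integer `m`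
and integer `r ≥ 0`, and `0` for `r < 0`. -/
noncomputable def Cgen (m r : ℤ) : ℝ :=
  if 0 ≤ r then (∏ k ∈ Finset.range r.toNat, ((m : ℝ) - (k : ℝ))) / (Nat.factorial r.toNat : ℝ)
  else 0


open Polynomial

lemma cgen_neg {m r : ℤ} (h : r < 0) : Cgen m r = 0 := by
  simp [Cgen, not_le.mpr h]

lemma cgen_zero (m : ℤ) : Cgen m 0 = 1 := by simp [Cgen]

lemma cgen_succ (m : ℤ) (r : ℕ) :
    Cgen m ((r : ℤ) + 1) = Cgen m r * (((m : ℝ) - r) / (r + 1)) := by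
  have h0 : ((r : ℤ) + 1).toNat = r + 1 := by omega
  have h1 : ((r : ℤ)).toNat = r := by omega
  simp only [Cgen, if_pos (show (0:ℤ) ≤ (r:ℤ) by omega),
    if_pos (show (0:ℤ) ≤ (r:ℤ) + 1 by omega), h0, h1, Finset.prod_range_succ,
    Nat.factorial_succ]
  push_cast
  rw [div_mul_div_comm, mul_comm ((Nat.factorial r : ℝ)) ((r : ℝ) + 1)]

lemma cgen_nat (a r : ℕ) : Cgen (a : ℤ) (r : ℤ) = (a.choose r : ℝ) := by
  induction r with
  | zero => simpa using cgen_zero (a : ℤ)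
  | succ r ih =>
    have : ((r + 1 : ℕ) : ℤ) = (r : ℤ) + 1 := by push_cast; ring
    rw [this, cgen_succ, ih]
    rcases lt_or_ge r a with h | h
    · have hh := Nat.choose_succ_right_eq a r
      have hc : ((a.choose (r+1) : ℝ)) * (r + 1) = (a.choose r : ℝ) * ((a : ℝ) - r) := by
        have := congrArg (fun x : ℕ => (x : ℝ)) hh
        push_cast [Nat.cast_sub h.le] at this
        linarith [this]
      have hr1 : ((r : ℝ) + 1) ≠ 0 := by positivity
      field_simp
      push_cast
      linarith [hc]
    · rcases eq_or_lt_of_le h with rfl | h'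
      · simp [Nat.choose_succ_self]
      · rw [Nat.choose_eq_zero_of_lt h', Nat.choose_eq_zero_of_lt (by omega)]
        ring

lemma cgen_pascal (M r : ℤ) : Cgen (M + 1) r = Cgen M r + Cgen M (r - 1) := by
  rcases lt_trichotomy r 0 with h | rfl | h
  · rw [cgen_neg h, cgen_neg h, cgen_neg (by omega)]; ring
  · rw [cgen_zero, cgen_zero, cgen_neg (by omega)]; ring
  · obtain ⟨s, rfl⟩ : ∃ s : ℕ, r = (s : ℤ) + 1 := ⟨(r - 1).toNat, by omega⟩
    have hts : ((s : ℤ)).toNat = s := by omega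
    have hts1 : ((s : ℤ) + 1).toNat = s + 1 := by omega
    have hs1 : ((s : ℤ) + 1 - 1) = (s : ℤ) := by ring
    simp only [Cgen, hs1, if_pos (show (0:ℤ) ≤ (s:ℤ) by omega),
      if_pos (show (0:ℤ) ≤ (s:ℤ) + 1 by omega), hts, hts1]
    rw [Finset.prod_range_succ']
    have hprod : (∏ k ∈ Finset.range s, (((M + 1 : ℤ) : ℝ) - ((k + 1 : ℕ) : ℝ)))
        = ∏ k ∈ Finset.range s, ((M : ℝ) - (k : ℝ)) :=
      Finset.prod_congr rfl fun k _ => by push_cast; ring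
    rw [hprod, Finset.prod_range_succ]
    have hfac : (Nat.factorial (s + 1) : ℝ) = (s + 1) * Nat.factorial s := by
      rw [Nat.factorial_succ]; push_cast; ring
    rw [hfac]
    have h1 : (Nat.factorial s : ℝ) ≠ 0 := by positivity
    have h2 : ((s : ℝ) + 1) ≠ 0 := by positivity
    field_simp
    push_cast
    ring
lemma mcoef_eq {m k l : ℕ} (h : k + l ≤ m) :
    Mcoef m k l = (m.choose k : ℝ) * ((m - k).choose l : ℝ) := by
  rw [Mcoef, if_pos h, Nat.cast_choose ℝ (show k ≤ m by omega),
    Nat.cast_choose ℝ (show l ≤ m - k by omega)]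
  have h1 : (Nat.factorial k : ℝ) ≠ 0 := by positivity
  have h2 : (Nat.factorial l : ℝ) ≠ 0 := by positivity
  have h3 : (Nat.factorial (m - k) : ℝ) ≠ 0 := by positivity
  have h4 : (Nat.factorial (m - k - l) : ℝ) ≠ 0 := by positivity
  field_simp

lemma poly_id (m : ℕ) :
    ∑ k ∈ range (m + 1), ∑ l ∈ range (m + 1 - k),
      C (Mcoef m k l * (-1 : ℝ) ^ l) * (X ^ (2 * l) * (1 + X) ^ (2 * (m - k - l))) =
    C ((2 : ℝ) ^ m) * (1 + X) ^ m := by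
  have key : (C ((2 : ℝ) ^ m) * (1 + X) ^ m : ℝ[X]) =
      ((1 : ℝ[X]) + (-(X ^ 2) + (1 + X) ^ 2)) ^ m := by
    rw [map_pow, ← mul_pow]
    congr 1
    rw [map_ofNat]
    ring
  rw [key, add_pow]
  refine Finset.sum_congr rfl fun k hk => ?_
  have hk' : k ≤ m := by simp only [mem_range] at hk; omega
  rw [add_pow]
  have hrange : m + 1 - k = (m - k) + 1 := by omega
  rw [hrange, one_pow, one_mul, Finset.sum_mul]
  refine Finset.sum_congr rfl fun l hl => ?_
  have hl' : l ≤ m - k := by simp only [mem_range] at hl; omega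
  rw [mcoef_eq (show k + l ≤ m by omega), map_mul, map_mul, map_pow, map_neg, map_one,
    Polynomial.C_eq_natCast, Polynomial.C_eq_natCast,
    show (((1 + X : ℝ[X])) ^ 2) ^ (m - k - l) = (1 + X) ^ (2 * (m - k - l)) from by
      rw [← pow_mul]]
  ring
lemma coeff_term (c : ℝ) (e d j : ℕ) :
    (C c * (X ^ e * (1 + X) ^ d)).coeff j = c * Cgen (d : ℤ) ((j : ℤ) - e) := by
  rw [coeff_C_mul, mul_comm (X ^ e : ℝ[X]) ((1 + X) ^ d), coeff_mul_X_pow']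
  rcases le_or_gt e j with h | h
  · rw [if_pos h, coeff_one_add_X_pow]
    congr 1
    rw [show (j : ℤ) - e = ((j - e : ℕ) : ℤ) by omega, cgen_nat]
  · rw [if_neg (by omega), cgen_neg (by omega), mul_zero]

lemma sumP (m j : ℕ) :
    ∑ k ∈ range (m + 1), ∑ l ∈ range (m + 1 - k),
      Mcoef m k l * (-1 : ℝ) ^ l * Cgen (2 * ((m : ℤ) - k - l)) ((j : ℤ) - 2 * l) =
    (2 : ℝ) ^ m * (m.choose j : ℝ) := by
  have hrhs : (2 : ℝ) ^ m * (m.choose j : ℝ) = (C ((2:ℝ) ^ m) * (1 + X) ^ m).coeff j := by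
    rw [coeff_C_mul, coeff_one_add_X_pow]
  rw [hrhs, ← poly_id m, finset_sum_coeff]
  refine Finset.sum_congr rfl fun k hk => ?_
  rw [finset_sum_coeff]
  refine Finset.sum_congr rfl fun l hl => ?_
  have hk' : k ≤ m := by simp only [mem_range] at hk; omega
  have hl' : l ≤ m - k := by simp only [mem_range] at hl; omega
  rw [coeff_term, show ((2 * (m - k - l) : ℕ) : ℤ) = 2 * ((m : ℤ) - k - l) by omega,
    show ((j : ℤ) - ((2 * l : ℕ) : ℤ)) = (j : ℤ) - 2 * l by omega]

lemma T_formula (m : ℕ) (hm : 1 ≤ m) (i : ℕ) :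
    ∑ k ∈ range (m + 1), ∑ l ∈ range (m + 1 - k),
      Mcoef m k l * (-1 : ℝ) ^ l * Cgen (2 * (m : ℤ) - 2 * k - 2 * l - 1) ((i : ℤ) - 2 * l) =
    (2 : ℝ) ^ m * ((m - 1).choose i : ℝ) := by
  obtain ⟨m', rfl⟩ : ∃ m', m = m' + 1 := ⟨m - 1, by omega⟩
  induction i with
  | zero =>
    have hstep : ∀ k ∈ range (m' + 1 + 1),
        (∑ l ∈ range (m' + 1 + 1 - k), Mcoef (m' + 1) k l * (-1 : ℝ) ^ l *
          Cgen (2 * ((m' + 1 : ℕ) : ℤ) - 2 * k - 2 * l - 1) (((0 : ℕ) : ℤ) - 2 * l))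
        = ((m' + 1).choose k : ℝ) := by
      intro k hk
      have hk' : k ≤ m' + 1 := by simp only [mem_range] at hk; omega
      rw [Finset.sum_eq_single 0]
      · rw [mcoef_eq (show k + 0 ≤ m' + 1 by omega),
          show (((0:ℕ):ℤ) - 2 * (0:ℕ)) = 0 by omega, cgen_zero]
        simp
      · intro l hl hl0
        rw [cgen_neg (show ((0:ℕ):ℤ) - 2 * l < 0 by omega), mul_zero]
      · intro hc
        exact absurd (Finset.mem_range.mpr (by omega)) hc
    rw [Finset.sum_congr rfl hstep, ← Nat.cast_sum, Nat.sum_range_choose]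
    simp
  | succ i ih =>
    have key : (∑ k ∈ range (m' + 1 + 1), ∑ l ∈ range (m' + 1 + 1 - k),
          Mcoef (m' + 1) k l * (-1 : ℝ) ^ l *
            Cgen (2 * ((m' + 1 : ℕ) : ℤ) - 2 * k - 2 * l - 1) (((i + 1 : ℕ) : ℤ) - 2 * l))
        + (∑ k ∈ range (m' + 1 + 1), ∑ l ∈ range (m' + 1 + 1 - k),
          Mcoef (m' + 1) k l * (-1 : ℝ) ^ l *
            Cgen (2 * ((m' + 1 : ℕ) : ℤ) - 2 * k - 2 * l - 1) (((i : ℕ) : ℤ) - 2 * l))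
        = (2 : ℝ) ^ (m' + 1) * ((m' + 1).choose (i + 1) : ℝ) := by
      rw [← Finset.sum_add_distrib, ← sumP (m' + 1) (i + 1)]
      refine Finset.sum_congr rfl fun k hk => ?_
      rw [← Finset.sum_add_distrib]
      refine Finset.sum_congr rfl fun l hl => ?_
      rw [← mul_add]
      congr 1
      have hp := cgen_pascal (2 * ((m' + 1 : ℕ) : ℤ) - 2 * k - 2 * l - 1)
        (((i + 1 : ℕ) : ℤ) - 2 * l)
      rw [show (2 * ((m' + 1 : ℕ) : ℤ) - 2 * k - 2 * l - 1) + 1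
          = 2 * (((m' + 1 : ℕ) : ℤ) - k - l) by ring,
        show (((i + 1 : ℕ) : ℤ) - 2 * l) - 1 = ((i : ℕ) : ℤ) - 2 * l by omega] at hp
      rw [hp, show ((i + 1 : ℕ) : ℤ) - 2 * l = ((i + 1 : ℕ) : ℤ) - 2 * l from rfl]
    have hpas : ((m' + 1).choose (i + 1) : ℝ) = (m'.choose i : ℝ) + (m'.choose (i + 1) : ℝ) := by
      rw [← Nat.cast_add, ← Nat.choose_succ_succ]
    have hsimp : (m' + 1 - 1) = m' := by omega
    rw [hsimp] at ih ⊢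
    rw [hpas, mul_add] at key
    linarith [key, ih]

/-- Evaluation of the hook eigenvalue numerator at `p = 1/2`:
`S(n,i) = 2^{n/2} C(n/2−1, i)` when `2i ≤ n−1`, and `S(n,i) = 0` when `i ≥ n/2`. -/
theorem stmt13 (n : ℕ) (hn : 2 ≤ n) (hne : Even n) (i : ℕ) (hi : i ≤ n - 1) (S : ℝ)
    (hS : S = ∑ k ∈ Finset.range (n / 2 + 1), ∑ l ∈ Finset.range (n / 2 + 1 - k),
        Mcoef (n / 2) k l * (-1 : ℝ) ^ l *
          Cgen ((n : ℤ) - 2 * k - 2 * l - 1) ((i : ℤ) - 2 * l)) :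
    (2 * i ≤ n - 1 → S = (2 : ℝ) ^ (n / 2) * ((n / 2 - 1).choose i : ℝ)) ∧
    (n / 2 ≤ i → S = 0) := by
  obtain ⟨m, hm2⟩ := hne
  have hd : n / 2 = m := by omega
  have hm1 : 1 ≤ m := by omega
  rw [hd] at hS
  have hmain : S = (2 : ℝ) ^ m * ((m - 1).choose i : ℝ) := by
    rw [hS, ← T_formula m hm1 i]
    refine Finset.sum_congr rfl fun k _ => Finset.sum_congr rfl fun l _ => ?_
    congr 2
    omega
  constructor
  · intro _
    rw [hmain, hd]
  · intro h2
    rw [hmain, Nat.choose_eq_zero_of_lt (by omega), Nat.cast_zero, mul_zero]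
end
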